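/- Let V be a real vector space and let σ₀, σ₁, σ₂ be nonnegative nonzero quadratic forms on V. Assume that for every s > 0 the quadratic form σˢ := σ₀ − s·σ₁ − s⁻¹·σ₂ is not nonnegative, i.e., for every s > 0 there exists x ∈ V with σ₀[x] < s·σ₁[x] + s⁻¹·σ₂[x]. Then the set S := { (s,t) ∈ (0,∞)×(0,∞) : there exists x ∈ V with σ₀[x] − s·σ₁[x] − s⁻¹·σ₂[x] < 0, σ₁[x] > 0, and σ₂[x] = t²·σ₁[x] } is a connected subset of ℝ². -/

import Mathlib

open Set QuadraticMap

namespace SconnAux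

variable {V : Type*} [AddCommGroup V] [Module ℝ V]

noncomputable def tv (σ₁ σ₂ : QuadraticForm ℝ V) (x : V) : ℝ := Real.sqrt (σ₂ x / σ₁ x)

def ph (σ₀ σ₁ σ₂ : QuadraticForm ℝ V) (x : V) (u : ℝ) : ℝ :=
  σ₁ x * u ^ 2 - σ₀ x * u + σ₂ x

def Sset (σ₀ σ₁ σ₂ : QuadraticForm ℝ V) : Set (ℝ × ℝ) :=
  {p : ℝ × ℝ | 0 < p.1 ∧ 0 < p.2 ∧ ∃ x : V,
    σ₀ x - p.1 * σ₁ x - p.1⁻¹ * σ₂ x < 0 ∧ 0 < σ₁ x ∧ σ₂ x = p.2 ^ 2 * σ₁ x}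

lemma expand (σ : QuadraticForm ℝ V) (x d : V) (θ : ℝ) :
    σ (x + θ • d) = σ x + polar (⇑σ) x d * θ + σ d * θ ^ 2 := by
  have h1 : σ (x + θ • d) = σ x + σ (θ • d) + polar (⇑σ) x (θ • d) := by
    simp [QuadraticMap.polar]
  rw [h1, QuadraticMap.map_smul, QuadraticMap.polar_smul_right]
  simp [smul_eq_mul]; ring

lemma cont_quad (σ : QuadraticForm ℝ V) (x d : V) :
    Continuous fun θ : ℝ => σ (x + θ • d) := by
  have h : (fun θ : ℝ => σ (x + θ • d))
      = fun θ => σ x + polar (⇑σ) x d * θ + σ d * θ ^ 2 := funext fun θ => expand σ x d θ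
  rw [h]; fun_prop

lemma polar_eq_zero (σ : QuadraticForm ℝ V) (hnn : ∀ v, 0 ≤ σ v) {x : V} (hx : σ x = 0)
    (y : V) : polar (⇑σ) x y = 0 := by
  set P := polar (⇑σ) x y with hP
  set A := σ y with hA
  have hA0 : 0 ≤ A := hnn y
  have key : ∀ c : ℝ, 0 ≤ P * c + A * c ^ 2 := by
    intro c
    have := hnn (x + c • y)
    rw [expand σ x y c, hx] at this
    linarith
  have h1 := key (-(P * (A + 1)⁻¹))
  have hA1 : (0:ℝ) < A + 1 := by linarith
  have h2 : P * -(P * (A + 1)⁻¹) + A * (-(P * (A + 1)⁻¹)) ^ 2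
      = -(P ^ 2 * (A + 1)⁻¹ ^ 2) := by
    field_simp
    ring
  rw [h2] at h1
  have h3 : P ^ 2 * (A + 1)⁻¹ ^ 2 = 0 := le_antisymm (by linarith) (by positivity)
  have h4 : (A + 1)⁻¹ ≠ 0 := by positivity
  have := mul_eq_zero.1 h3
  rcases this with h | h
  · exact pow_eq_zero_iff (n := 2) (by norm_num) |>.1 h
  · exact absurd (pow_eq_zero_iff (n := 2) (by norm_num) |>.1 h) h4

lemma null_two (σ : QuadraticForm ℝ V) (hnn : ∀ v, 0 ≤ σ v) {x d : V} {a b : ℝ}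
    (hab : a ≠ b) (ha : σ (x + a • d) = 0) (hb : σ (x + b • d) = 0) : σ x = 0 := by
  set z := x + a • d with hz
  have hzb : x + b • d = z + (b - a) • d := by rw [hz, sub_smul]; abel
  have hpol : ∀ w, polar (⇑σ) z w = 0 := polar_eq_zero σ hnn ha
  have hd : σ d = 0 := by
    have h1 : σ (z + (b - a) • d) = 0 := by rw [← hzb]; exact hb
    rw [expand σ z d (b - a), ha, hpol d] at h1
    have hba : (b - a) ^ 2 ≠ 0 := pow_ne_zero _ (sub_ne_zero.2 (Ne.symm hab))
    have : σ d * (b - a) ^ 2 = 0 := by linarith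
    exact (mul_eq_zero.1 this).resolve_right hba
  have hx : x = z + (-a) • d := by rw [hz]; module
  rw [hx, expand σ z d (-a), ha, hpol d, hd]; ring


variable {σ₀ σ₁ σ₂ : QuadraticForm ℝ V}

lemma mem_S {x : V} (h1 : 0 < σ₁ x) (h2 : 0 < σ₂ x) {u : ℝ} (hu : 0 < u)
    (hph : 0 < ph σ₀ σ₁ σ₂ x u) : (u, tv σ₁ σ₂ x) ∈ Sset σ₀ σ₁ σ₂ := by
  refine ⟨hu, Real.sqrt_pos.2 (div_pos h2 h1), x, ?_, h1, ?_⟩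
  · have he : σ₀ x - u * σ₁ x - u⁻¹ * σ₂ x = -(ph σ₀ σ₁ σ₂ x u) / u := by
      field_simp [ph]; simp only [ph]; ring
    rw [he]
    exact div_neg_of_neg_of_pos (by linarith) hu
  · have : (tv σ₁ σ₂ x) ^ 2 = σ₂ x / σ₁ x := Real.sq_sqrt (div_nonneg h2.le h1.le)
    rw [this]; field_simp

lemma extract {p : ℝ × ℝ} (hp : p ∈ Sset σ₀ σ₁ σ₂) :
    ∃ x : V, 0 < σ₁ x ∧ 0 < σ₂ x ∧ tv σ₁ σ₂ x = p.2 ∧ 0 < ph σ₀ σ₁ σ₂ x p.1 := by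
  obtain ⟨hs, ht, x, hlt, h1, heq⟩ := hp
  have h2 : 0 < σ₂ x := by rw [heq]; positivity
  refine ⟨x, h1, h2, ?_, ?_⟩
  · rw [tv, heq]
    rw [mul_div_assoc, div_self h1.ne', mul_one, Real.sqrt_sq ht.le]
  · have he : ph σ₀ σ₁ σ₂ x p.1 = -(σ₀ x - p.1 * σ₁ x - p.1⁻¹ * σ₂ x) * p.1 := by
      field_simp [ph]; simp only [ph]; ring
    rw [he]
    exact mul_pos (by linarith) hs

/-- two points joined by a preconnected subset -/
def J (S : Set (ℝ × ℝ)) (p q : ℝ × ℝ) : Prop :=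
  ∃ C, C ⊆ S ∧ IsPreconnected C ∧ p ∈ C ∧ q ∈ C

lemma J.symm {S : Set (ℝ × ℝ)} {p q : ℝ × ℝ} (h : J S p q) : J S q p := by
  obtain ⟨C, h1, h2, h3, h4⟩ := h; exact ⟨C, h1, h2, h4, h3⟩

lemma J.trans {S : Set (ℝ × ℝ)} {p q r : ℝ × ℝ} (h : J S p q) (h' : J S q r) : J S p r := by
  obtain ⟨C, hC1, hC2, hC3, hC4⟩ := h
  obtain ⟨D, hD1, hD2, hD3, hD4⟩ := h'
  exact ⟨C ∪ D, union_subset hC1 hD1, IsPreconnected.union q hC4 hD3 hC2 hD2,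
    mem_union_left _ hC3, mem_union_right _ hD4⟩

lemma horiz {x : V} (h1 : 0 < σ₁ x) (h2 : 0 < σ₂ x) {a b : ℝ} (ha : 0 < a) (hab : a ≤ b)
    (h : ∀ u, a ≤ u → u ≤ b → 0 < ph σ₀ σ₁ σ₂ x u) :
    J (Sset σ₀ σ₁ σ₂) (a, tv σ₁ σ₂ x) (b, tv σ₁ σ₂ x) := by
  refine ⟨Icc a b ×ˢ {tv σ₁ σ₂ x}, ?_, isPreconnected_Icc.prod isPreconnected_singleton,
    ⟨⟨le_refl a, hab⟩, rfl⟩, ⟨⟨hab, le_refl b⟩, rfl⟩⟩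
  rintro ⟨u, t⟩ ⟨hu, ht⟩
  simp only [mem_singleton_iff] at ht
  subst ht
  exact mem_S h1 h2 (lt_of_lt_of_le ha hu.1) (h u hu.1 hu.2)

/-- convexity dichotomy for the quadratic `ph` -/
lemma dich_right {x : V} (h1 : 0 ≤ σ₁ x) {s u₁ u : ℝ} (hs : 0 < ph σ₀ σ₁ σ₂ x s)
    (hbad : ph σ₀ σ₁ σ₂ x u₁ ≤ 0) (h1s : u₁ < s) (hsu : s ≤ u) : 0 < ph σ₀ σ₁ σ₂ x u := by
  rcases eq_or_lt_of_le hsu with rfl | hsu'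
  · exact hs
  by_contra hc
  push_neg at hc
  simp only [ph] at *
  nlinarith [mul_nonneg (mul_nonneg (sub_nonneg.2 hsu) (le_of_lt (sub_pos.2 h1s)))
    (le_of_lt (sub_pos.2 (lt_trans h1s hsu'))), sq_nonneg (u - u₁), sq_nonneg (u - s),
    mul_nonneg h1 (mul_nonneg (mul_nonneg (sub_nonneg.2 hsu) (le_of_lt (sub_pos.2 h1s))) (le_of_lt (sub_pos.2 (lt_trans h1s hsu'))))]

lemma dich_left {x : V} (h1 : 0 ≤ σ₁ x) {s u₂ u : ℝ} (hs : 0 < ph σ₀ σ₁ σ₂ x s)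
    (hbad : ph σ₀ σ₁ σ₂ x u₂ ≤ 0) (hs2 : s < u₂) (hus : u ≤ s) : 0 < ph σ₀ σ₁ σ₂ x u := by
  rcases eq_or_lt_of_le hus with rfl | hus'
  · exact hs
  by_contra hc
  push_neg at hc
  simp only [ph] at *
  nlinarith [mul_nonneg h1 (mul_nonneg (mul_nonneg (le_of_lt (sub_pos.2 hus')) (le_of_lt (sub_pos.2 hs2))) (le_of_lt (sub_pos.2 (lt_trans hus' hs2))))]

lemma dich {x : V} (h1 : 0 ≤ σ₁ x) {s : ℝ} (hs0 : 0 < s) (hs : 0 < ph σ₀ σ₁ σ₂ x s) :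
    (∀ u, 0 < u → u ≤ s → 0 < ph σ₀ σ₁ σ₂ x u) ∨ (∀ u, s ≤ u → 0 < ph σ₀ σ₁ σ₂ x u) := by
  by_cases h : ∀ u, 0 < u → u ≤ s → 0 < ph σ₀ σ₁ σ₂ x u
  · exact Or.inl h
  · push_neg at h
    obtain ⟨u₁, hu₁0, hu₁s, hbad⟩ := h
    have hne : u₁ < s := lt_of_le_of_ne hu₁s (by rintro rfl; exact absurd hs (not_lt.2 hbad))
    exact Or.inr fun u hu => dich_right h1 hs hbad hne hu

lemma ph_pos_small {x : V} (h0 : 0 ≤ σ₀ x) (h1 : 0 ≤ σ₁ x) (h2 : 0 < σ₂ x) :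
    ∀ u, 0 < u → u ≤ σ₂ x / (σ₀ x + 1) → 0 < ph σ₀ σ₁ σ₂ x u := by
  intro u hu hub
  have h01 : (0:ℝ) < σ₀ x + 1 := by linarith
  have : u * (σ₀ x + 1) ≤ σ₂ x := (le_div_iff₀ h01).1 hub
  simp only [ph]
  nlinarith [mul_nonneg h1 (sq_nonneg u)]

lemma ph_pos_large {x : V} (h0 : 0 ≤ σ₀ x) (h1 : 0 < σ₁ x) (h2 : 0 ≤ σ₂ x) :
    ∀ u, (σ₀ x + 1) / σ₁ x ≤ u → 0 < ph σ₀ σ₁ σ₂ x u := by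
  intro u hub
  have h01 : (0:ℝ) < σ₀ x + 1 := by linarith
  have hu : 0 < u := lt_of_lt_of_le (div_pos h01 h1) hub
  have : σ₀ x + 1 ≤ σ₁ x * u := by
    rw [div_le_iff₀ h1] at hub; linarith
  simp only [ph]
  nlinarith

lemma quad_small (A B : ℝ) {C : ℝ} (hC : 0 < C) :
    ∃ ε > 0, ∀ α : ℝ, |α| < ε → 0 < C + B * α + A * α ^ 2 := by
  refine ⟨min 1 (C / (|A| + |B| + 1)), lt_min one_pos (by positivity), fun α hα => ?_⟩
  have h1 : |α| < 1 := lt_of_lt_of_le hα (min_le_left _ _)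
  have h2 : |α| < C / (|A| + |B| + 1) := lt_of_lt_of_le hα (min_le_right _ _)
  have h3 : |α| * (|A| + |B| + 1) < C := by
    rw [← lt_div_iff₀ (by positivity)]; exact h2
  have hBa : B * α ≥ -(|B| * |α|) := by
    have := abs_mul B α ▸ neg_abs_le (B * α); linarith [neg_abs_le (B*α), (abs_mul B α)]
  have hAa : A * α ^ 2 ≥ -(|A| * |α|) := by
    have h4 : |A * α ^ 2| = |A| * |α| ^ 2 := by rw [abs_mul, abs_pow]
    have h5 : |A| * |α| ^ 2 ≤ |A| * |α| := by
      nlinarith [mul_nonneg (abs_nonneg A) (mul_nonneg (abs_nonneg α) (by linarith : (0:ℝ) ≤ 1 - |α|))]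
    linarith [neg_abs_le (A * α ^ 2), h4 ▸ neg_abs_le (A * α ^ 2)]
  nlinarith [abs_nonneg α, abs_nonneg A, abs_nonneg B]


lemma ph_expand (x d : V) (s α : ℝ) :
    ph σ₀ σ₁ σ₂ (x + α • d) s = ph σ₀ σ₁ σ₂ x s
      + (polar (⇑σ₁) x d * s ^ 2 - polar (⇑σ₀) x d * s + polar (⇑σ₂) x d) * α
      + (σ₁ d * s ^ 2 - σ₀ d * s + σ₂ d) * α ^ 2 := by
  simp only [ph, expand]; ring

lemma perturb (h₀ : ∀ v, 0 ≤ σ₀ v) (h₁ : ∀ v, 0 ≤ σ₁ v) (h₂ : ∀ v, 0 ≤ σ₂ v)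
    (h₁ne : ∃ v, σ₁ v ≠ 0) (h₂ne : ∃ v, σ₂ v ≠ 0)
    {s : ℝ} (hs : 0 < s) (x₀ : V) (hx₀ : σ₀ x₀ < s * σ₁ x₀ + s⁻¹ * σ₂ x₀) :
    ∃ x : V, 0 < σ₁ x ∧ 0 < σ₂ x ∧ 0 < ph σ₀ σ₁ σ₂ x s := by
  have hph0 : 0 < ph σ₀ σ₁ σ₂ x₀ s := by
    have h := mul_lt_mul_of_pos_left hx₀ hs
    have h3 : s * (s⁻¹ * σ₂ x₀) = σ₂ x₀ := by field_simp
    simp only [ph]; nlinarith [h, h3]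
  rcases eq_or_lt_of_le (h₁ x₀) with hz1 | hp1
  · -- σ₁ x₀ = 0, so σ₂ x₀ > 0 ; perturb with e₁
    obtain ⟨e₁, he₁⟩ := h₁ne
    have he₁p : 0 < σ₁ e₁ := lt_of_le_of_ne (h₁ e₁) (Ne.symm he₁)
    have h2p : 0 < σ₂ x₀ := by
      simp only [ph] at hph0
      nlinarith [h₀ x₀, mul_nonneg (h₀ x₀) hs.le]
    obtain ⟨ε₁, hε₁, hq₁⟩ := quad_small (σ₁ e₁ * s ^ 2 - σ₀ e₁ * s + σ₂ e₁)
      (polar (⇑σ₁) x₀ e₁ * s ^ 2 - polar (⇑σ₀) x₀ e₁ * s + polar (⇑σ₂) x₀ e₁) hph0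
    obtain ⟨ε₂, hε₂, hq₂⟩ := quad_small (σ₂ e₁) (polar (⇑σ₂) x₀ e₁) h2p
    set α := min ε₁ ε₂ / 2 with hα
    have hα0 : 0 < α := by positivity
    have hαabs : |α| = α := abs_of_pos hα0
    have hα1 : |α| < ε₁ := by rw [hαabs]; calc α < min ε₁ ε₂ := by rw [hα]; have := lt_min hε₁ hε₂; linarith
                                                _ ≤ ε₁ := min_le_left _ _
    have hα2 : |α| < ε₂ := by rw [hαabs]; calc α < min ε₁ ε₂ := by rw [hα]; have := lt_min hε₁ hε₂; linarith
                                                _ ≤ ε₂ := min_le_right _ _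
    refine ⟨x₀ + α • e₁, ?_, ?_, ?_⟩
    · rw [expand σ₁ x₀ e₁ α, ← hz1, polar_eq_zero σ₁ h₁ hz1.symm]
      have : 0 < σ₁ e₁ * α ^ 2 := mul_pos he₁p (pow_pos hα0 2)
      linarith
    · rw [expand σ₂ x₀ e₁ α]
      have := hq₂ α hα2
      linarith [hq₂ α hα2]
    · rw [ph_expand]
      linarith [hq₁ α hα1]
  rcases eq_or_lt_of_le (h₂ x₀) with hz2 | hp2
  · -- σ₂ x₀ = 0, σ₁ x₀ > 0 ; perturb with e₂
    obtain ⟨e₂, he₂⟩ := h₂ne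
    have he₂p : 0 < σ₂ e₂ := lt_of_le_of_ne (h₂ e₂) (Ne.symm he₂)
    obtain ⟨ε₁, hε₁, hq₁⟩ := quad_small (σ₁ e₂ * s ^ 2 - σ₀ e₂ * s + σ₂ e₂)
      (polar (⇑σ₁) x₀ e₂ * s ^ 2 - polar (⇑σ₀) x₀ e₂ * s + polar (⇑σ₂) x₀ e₂) hph0
    obtain ⟨ε₂, hε₂, hq₂⟩ := quad_small (σ₁ e₂) (polar (⇑σ₁) x₀ e₂) hp1
    set α := min ε₁ ε₂ / 2 with hα
    have hα0 : 0 < α := by positivity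
    have hαabs : |α| = α := abs_of_pos hα0
    have hα1 : |α| < ε₁ := by rw [hαabs]; calc α < min ε₁ ε₂ := by rw [hα]; have := lt_min hε₁ hε₂; linarith
                                                _ ≤ ε₁ := min_le_left _ _
    have hα2 : |α| < ε₂ := by rw [hαabs]; calc α < min ε₁ ε₂ := by rw [hα]; have := lt_min hε₁ hε₂; linarith
                                                _ ≤ ε₂ := min_le_right _ _
    refine ⟨x₀ + α • e₂, ?_, ?_, ?_⟩
    · rw [expand σ₁ x₀ e₂ α]
      linarith [hq₂ α hα2]
    · rw [expand σ₂ x₀ e₂ α, ← hz2, polar_eq_zero σ₂ h₂ hz2.symm]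
      have : 0 < σ₂ e₂ * α ^ 2 := mul_pos he₂p (pow_pos hα0 2)
      linarith
    · rw [ph_expand]
      linarith [hq₁ α hα1]
  exact ⟨x₀, hp1, hp2, hph0⟩


lemma seg {x d : V} {s α β : ℝ} (hs : 0 < s) (hαβ : α ≤ β)
    (hgood : ∀ θ ∈ Icc α β, 0 < σ₁ (x + θ • d) ∧ 0 < σ₂ (x + θ • d))
    (hq : ∀ θ ∈ Icc α β, 0 < ph σ₀ σ₁ σ₂ (x + θ • d) s) :
    J (Sset σ₀ σ₁ σ₂) (s, tv σ₁ σ₂ (x + α • d)) (s, tv σ₁ σ₂ (x + β • d)) := by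
  refine ⟨(fun θ => (s, tv σ₁ σ₂ (x + θ • d))) '' Icc α β, ?_, ?_,
    ⟨α, ⟨le_refl _, hαβ⟩, rfl⟩, ⟨β, ⟨hαβ, le_refl _⟩, rfl⟩⟩
  · rintro _ ⟨θ, hθ, rfl⟩
    exact mem_S (hgood θ hθ).1 (hgood θ hθ).2 hs (hq θ hθ)
  · apply isPreconnected_Icc.image
    apply ContinuousOn.prodMk continuousOn_const
    simp only [tv]
    apply ContinuousOn.sqrt
    exact ((cont_quad σ₂ x d).continuousOn).div ((cont_quad σ₁ x d).continuousOn)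
      (fun θ hθ => (hgood θ hθ).1.ne')

lemma cross1 (h₀ : ∀ v, 0 ≤ σ₀ v) (h₁ : ∀ v, 0 ≤ σ₁ v) (h₂ : ∀ v, 0 ≤ σ₂ v)
    {x d : V} {s α β γ : ℝ} (hs : 0 < s) (hαγ : α < γ) (hγβ : γ < β)
    (hγ1 : σ₁ (x + γ • d) = 0)
    (hgood : ∀ θ ∈ Icc α β, θ ≠ γ → 0 < σ₁ (x + θ • d) ∧ 0 < σ₂ (x + θ • d))
    (hq : ∀ θ ∈ Icc α β, 0 < ph σ₀ σ₁ σ₂ (x + θ • d) s) :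
    J (Sset σ₀ σ₁ σ₂) (s, tv σ₁ σ₂ (x + α • d)) (s, tv σ₁ σ₂ (x + β • d)) := by
  have hγI : γ ∈ Icc α β := ⟨hαγ.le, hγβ.le⟩
  have hCγ : 0 < σ₂ (x + γ • d) - s * σ₀ (x + γ • d) := by
    have h := hq γ hγI
    simp only [ph] at h
    rw [hγ1] at h
    nlinarith [h, sq_nonneg s]
  -- find δ
  have hcont : Continuous fun θ : ℝ => σ₂ (x + θ • d) - s * σ₀ (x + θ • d) :=
    (cont_quad σ₂ x d).sub (continuous_const.mul (cont_quad σ₀ x d))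
  have hU : IsOpen ({θ : ℝ | 0 < σ₂ (x + θ • d) - s * σ₀ (x + θ • d)} ∩ Ioo α β) :=
    (isOpen_lt continuous_const hcont).inter isOpen_Ioo
  have hγU : γ ∈ {θ : ℝ | 0 < σ₂ (x + θ • d) - s * σ₀ (x + θ • d)} ∩ Ioo α β :=
    ⟨hCγ, hαγ, hγβ⟩
  obtain ⟨ε, hε, hball⟩ := Metric.isOpen_iff.1 hU γ hγU
  set δ := ε / 2 with hδdef
  have hδ : 0 < δ := by positivity
  have hmem : ∀ θ : ℝ, |θ - γ| ≤ δ →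
      (0 < σ₂ (x + θ • d) - s * σ₀ (x + θ • d)) ∧ θ ∈ Ioo α β := by
    intro θ hθ
    have : θ ∈ Metric.ball γ ε := by
      rw [Metric.mem_ball, Real.dist_eq]; linarith
    exact hball this
  -- membership of the bridge
  have memE : ∀ θ : ℝ, |θ - γ| ≤ δ → θ ≠ γ → ∀ u : ℝ, 0 < u → u ≤ s →
      (u, tv σ₁ σ₂ (x + θ • d)) ∈ Sset σ₀ σ₁ σ₂ := by
    intro θ hθd hθγ u hu hus
    obtain ⟨hpos, hIoo⟩ := hmem θ hθd
    obtain ⟨hg1, hg2⟩ := hgood θ ⟨hIoo.1.le, hIoo.2.le⟩ hθγ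
    refine mem_S hg1 hg2 hu ?_
    simp only [ph]
    nlinarith [h₀ (x + θ • d), mul_nonneg (h₀ (x + θ • d)) (sub_nonneg.2 hus),
      mul_nonneg hg1.le (sq_nonneg u)]
  have f2γ : 0 < σ₂ (x + γ • d) := by nlinarith [hCγ, mul_nonneg hs.le (h₀ (x + γ • d))]
  -- unboundedness of τ on both sides of γ
  have hubgen : ∀ (M : ℝ) (F : Filter ℝ) (_ : F.NeBot) (_ : F ≤ nhds γ)
      (A : Set ℝ) (_ : A ∈ F) (_ : A ⊆ Icc α β \ {γ}),
      ∃ θ ∈ A, M ≤ tv σ₁ σ₂ (x + θ • d) := by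
    intro M F hFne hFle A hAF hAsub
    set M' := max M 1 with hM'def
    have hM'pos : (0:ℝ) < M' := lt_of_lt_of_le one_pos (le_max_right _ _)
    set ε' := σ₂ (x + γ • d) / 2 / M' ^ 2 with hε'def
    have hε'pos : 0 < ε' := by positivity
    have h1t : Filter.Tendsto (fun θ : ℝ => σ₁ (x + θ • d)) F (nhds 0) := by
      have h := (cont_quad σ₁ x d).tendsto γ
      rw [hγ1] at h
      exact h.mono_left hFle
    have h2t : Filter.Tendsto (fun θ : ℝ => σ₂ (x + θ • d)) F (nhds (σ₂ (x + γ • d))) :=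
      ((cont_quad σ₂ x d).tendsto γ).mono_left hFle
    have ev1 := h1t.eventually_lt_const hε'pos
    have ev2 := h2t.eventually_const_lt (half_lt_self f2γ)
    obtain ⟨θ, h1, h2, hA⟩ := (ev1.and (ev2.and (hAF : ∀ᶠ θ in F, θ ∈ A))).exists
    have hIcc := (hAsub hA).1
    have hne : θ ≠ γ := by
      have := (hAsub hA).2; simpa using this
    obtain ⟨hg1, hg2⟩ := hgood θ hIcc hne
    refine ⟨θ, hA, ?_⟩
    have hdiv : M' ^ 2 ≤ σ₂ (x + θ • d) / σ₁ (x + θ • d) := by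
      have heq : σ₂ (x + γ • d) / 2 / ε' = M' ^ 2 := by
        rw [hε'def]; field_simp
      have s1 : σ₂ (x + γ • d) / 2 / ε' ≤ σ₂ (x + θ • d) / ε' := by
        gcongr
      have s2 : σ₂ (x + θ • d) / ε' ≤ σ₂ (x + θ • d) / σ₁ (x + θ • d) := by
        gcongr
      linarith
    have hM'τ : M' ≤ tv σ₁ σ₂ (x + θ • d) := by
      simp only [tv]
      exact (Real.le_sqrt hM'pos.le (div_nonneg (h₂ _) (h₁ _))).2 hdiv
    linarith [le_max_left M 1]
  have hIccL : Ico (γ - δ) γ ⊆ Icc α β \ {γ} := by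
    rintro θ ⟨h1, h2⟩
    have := (hmem θ (by rw [abs_le]; constructor <;> linarith)).2
    exact ⟨⟨this.1.le, this.2.le⟩, by simp [h2.ne]⟩
  have hIccR : Ioc γ (γ + δ) ⊆ Icc α β \ {γ} := by
    rintro θ ⟨h1, h2⟩
    have := (hmem θ (by rw [abs_le]; constructor <;> linarith)).2
    exact ⟨⟨this.1.le, this.2.le⟩, by simp [h1.ne']⟩
  have hubL : ∀ M : ℝ, ∃ θ ∈ Ico (γ - δ) γ, M ≤ tv σ₁ σ₂ (x + θ • d) := by
    intro M
    refine hubgen M (nhdsWithin γ (Iio γ)) inferInstance nhdsWithin_le_nhds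
      (Ico (γ - δ) γ) ?_ hIccL
    exact Filter.mem_of_superset (Ioo_mem_nhdsLT_of_mem ⟨by linarith, le_refl γ⟩)
      (fun θ hθ => ⟨hθ.1.le, hθ.2⟩)
  have hubR : ∀ M : ℝ, ∃ θ ∈ Ioc γ (γ + δ), M ≤ tv σ₁ σ₂ (x + θ • d) := by
    intro M
    refine hubgen M (nhdsWithin γ (Ioi γ)) inferInstance nhdsWithin_le_nhds
      (Ioc γ (γ + δ)) ?_ hIccR
    exact Filter.mem_of_superset (Ioo_mem_nhdsGT_of_mem ⟨le_refl γ, by linarith⟩)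
      (fun θ hθ => ⟨hθ.1, hθ.2.le⟩)
  -- the two image sets
  have hτcont : ∀ A : Set ℝ, A ⊆ Icc α β \ {γ} →
      ContinuousOn (fun θ => tv σ₁ σ₂ (x + θ • d)) A := by
    intro A hA
    simp only [tv]
    apply ContinuousOn.sqrt
    refine ((cont_quad σ₂ x d).continuousOn).div ((cont_quad σ₁ x d).continuousOn) ?_
    intro θ hθ
    exact (hgood θ (hA hθ).1 (by simpa using (hA hθ).2)).1.ne'
  set τ := fun θ : ℝ => tv σ₁ σ₂ (x + θ • d) with hτdef
  set I₁ := τ '' Ico (γ - δ) γ with hI₁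
  set I₂ := τ '' Ioc γ (γ + δ) with hI₂
  have hpre1 : IsPreconnected I₁ := isPreconnected_Ico.image τ (hτcont _ hIccL)
  have hpre2 : IsPreconnected I₂ := isPreconnected_Ioc.image τ (hτcont _ hIccR)
  set T := max (τ (γ - δ)) (τ (γ + δ)) with hT
  have hmemδL : γ - δ ∈ Ico (γ - δ) γ := ⟨le_refl _, by linarith⟩
  have hmemδR : γ + δ ∈ Ioc γ (γ + δ) := ⟨by linarith, le_refl _⟩
  have hTI₁ : T ∈ I₁ := by
    obtain ⟨θ₁, hθ₁, hMθ₁⟩ := hubL T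
    exact hpre1.ordConnected.out (mem_image_of_mem τ hmemδL) (mem_image_of_mem τ hθ₁)
      ⟨le_max_left _ _, hMθ₁⟩
  have hTI₂ : T ∈ I₂ := by
    obtain ⟨θ₂, hθ₂, hMθ₂⟩ := hubR T
    exact hpre2.ordConnected.out (mem_image_of_mem τ hmemδR) (mem_image_of_mem τ hθ₂)
      ⟨le_max_right _ _, hMθ₂⟩
  -- the bridge
  have hbridge : J (Sset σ₀ σ₁ σ₂) (s, τ (γ - δ)) (s, τ (γ + δ)) := by
    refine ⟨(Ioc 0 s ×ˢ I₁) ∪ (Ioc 0 s ×ˢ I₂), ?_, ?_, ?_, ?_⟩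
    · rintro ⟨u, t⟩ (⟨hu, ⟨θ, hθ, rfl⟩⟩ | ⟨hu, ⟨θ, hθ, rfl⟩⟩)
      · exact memE θ (by rw [abs_le]; constructor <;> [linarith [hθ.1]; linarith [hθ.2]])
          hθ.2.ne u hu.1 hu.2
      · exact memE θ (by rw [abs_le]; constructor <;> [linarith [hθ.1]; linarith [hθ.2]])
          hθ.1.ne' u hu.1 hu.2
    · exact IsPreconnected.union (s, T) ⟨⟨hs, le_refl s⟩, hTI₁⟩ ⟨⟨hs, le_refl s⟩, hTI₂⟩
        ((isPreconnected_Ioc).prod hpre1) ((isPreconnected_Ioc).prod hpre2)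
    · exact Or.inl ⟨⟨hs, le_refl s⟩, mem_image_of_mem τ hmemδL⟩
    · exact Or.inr ⟨⟨hs, le_refl s⟩, mem_image_of_mem τ hmemδR⟩
  -- chain
  have hδαβ : α < γ - δ ∧ γ + δ < β := by
    constructor
    · linarith [(hmem (γ - δ) (by rw [abs_le]; constructor <;> linarith)).2.1]
    · linarith [(hmem (γ + δ) (by rw [abs_le]; constructor <;> linarith)).2.2]
  have hJ₁ : J (Sset σ₀ σ₁ σ₂) (s, tv σ₁ σ₂ (x + α • d)) (s, τ (γ - δ)) := by
    refine seg hs (by linarith [hδαβ.1]) ?_ ?_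
    · intro θ hθ
      exact hgood θ ⟨hθ.1, by linarith [hθ.2]⟩ (by linarith [hθ.2]: θ ≠ γ)
    · intro θ hθ
      exact hq θ ⟨hθ.1, by linarith [hθ.2]⟩
  have hJ₃ : J (Sset σ₀ σ₁ σ₂) (s, τ (γ + δ)) (s, tv σ₁ σ₂ (x + β • d)) := by
    refine seg hs (by linarith [hδαβ.2]) ?_ ?_
    · intro θ hθ
      exact hgood θ ⟨by linarith [hθ.1], hθ.2⟩ (by linarith [hθ.1]: θ ≠ γ)
    · intro θ hθ
      exact hq θ ⟨by linarith [hθ.1], hθ.2⟩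
  exact (hJ₁.trans hbridge).trans hJ₃

lemma cross2 (h₀ : ∀ v, 0 ≤ σ₀ v) (h₁ : ∀ v, 0 ≤ σ₁ v) (h₂ : ∀ v, 0 ≤ σ₂ v)
    {x d : V} {s α β γ : ℝ} (hs : 0 < s) (hαγ : α < γ) (hγβ : γ < β)
    (hγ2 : σ₂ (x + γ • d) = 0)
    (hgood : ∀ θ ∈ Icc α β, θ ≠ γ → 0 < σ₁ (x + θ • d) ∧ 0 < σ₂ (x + θ • d))
    (hq : ∀ θ ∈ Icc α β, 0 < ph σ₀ σ₁ σ₂ (x + θ • d) s) :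
    J (Sset σ₀ σ₁ σ₂) (s, tv σ₁ σ₂ (x + α • d)) (s, tv σ₁ σ₂ (x + β • d)) := by
  have hγI : γ ∈ Icc α β := ⟨hαγ.le, hγβ.le⟩
  have hCγ : 0 < s * σ₁ (x + γ • d) - σ₀ (x + γ • d) := by
    have h := hq γ hγI
    simp only [ph] at h
    rw [hγ2] at h
    by_contra hc
    push_neg at hc
    nlinarith [mul_le_mul_of_nonneg_left hc hs.le]
  have hcont : Continuous fun θ : ℝ => s * σ₁ (x + θ • d) - σ₀ (x + θ • d) :=
    (continuous_const.mul (cont_quad σ₁ x d)).sub (cont_quad σ₀ x d)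
  have hU : IsOpen ({θ : ℝ | 0 < s * σ₁ (x + θ • d) - σ₀ (x + θ • d)} ∩ Ioo α β) :=
    (isOpen_lt continuous_const hcont).inter isOpen_Ioo
  have hγU : γ ∈ {θ : ℝ | 0 < s * σ₁ (x + θ • d) - σ₀ (x + θ • d)} ∩ Ioo α β :=
    ⟨hCγ, hαγ, hγβ⟩
  obtain ⟨ε, hε, hball⟩ := Metric.isOpen_iff.1 hU γ hγU
  set δ := ε / 2 with hδdef
  have hδ : 0 < δ := by positivity
  have hmem : ∀ θ : ℝ, |θ - γ| ≤ δ →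
      (0 < s * σ₁ (x + θ • d) - σ₀ (x + θ • d)) ∧ θ ∈ Ioo α β := by
    intro θ hθ
    have : θ ∈ Metric.ball γ ε := by
      rw [Metric.mem_ball, Real.dist_eq]; linarith
    exact hball this
  have memE : ∀ θ : ℝ, |θ - γ| ≤ δ → θ ≠ γ → ∀ u : ℝ, s ≤ u →
      (u, tv σ₁ σ₂ (x + θ • d)) ∈ Sset σ₀ σ₁ σ₂ := by
    intro θ hθd hθγ u hus
    have hu : 0 < u := lt_of_lt_of_le hs hus
    obtain ⟨hpos, hIoo⟩ := hmem θ hθd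
    obtain ⟨hg1, hg2⟩ := hgood θ ⟨hIoo.1.le, hIoo.2.le⟩ hθγ
    refine mem_S hg1 hg2 hu ?_
    simp only [ph]
    nlinarith [mul_nonneg (mul_nonneg hu.le hg1.le) (sub_nonneg.2 hus),
      mul_pos hu hpos, h₂ (x + θ • d)]
  have f1γ : 0 < σ₁ (x + γ • d) := by
    rcases eq_or_lt_of_le (h₁ (x + γ • d)) with hz | hp
    · rw [← hz] at hCγ; simp at hCγ; linarith [h₀ (x + γ • d)]
    · exact hp
  -- small values of τ on both sides of γ
  have hlowgen : ∀ (M : ℝ) (_ : 0 < M) (F : Filter ℝ) (_ : F.NeBot) (_ : F ≤ nhds γ)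
      (A : Set ℝ) (_ : A ∈ F) (_ : A ⊆ Icc α β \ {γ}),
      ∃ θ ∈ A, tv σ₁ σ₂ (x + θ • d) ≤ M := by
    intro M hM F hFne hFle A hAF hAsub
    set ε' := M ^ 2 * (σ₁ (x + γ • d) / 2) with hε'def
    have hε'pos : 0 < ε' := by positivity
    have h2t : Filter.Tendsto (fun θ : ℝ => σ₂ (x + θ • d)) F (nhds 0) := by
      have h := (cont_quad σ₂ x d).tendsto γ
      rw [hγ2] at h
      exact h.mono_left hFle
    have h1t : Filter.Tendsto (fun θ : ℝ => σ₁ (x + θ • d)) F (nhds (σ₁ (x + γ • d))) :=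
      ((cont_quad σ₁ x d).tendsto γ).mono_left hFle
    have ev2 := h2t.eventually_lt_const hε'pos
    have ev1 := h1t.eventually_const_lt (half_lt_self f1γ)
    obtain ⟨θ, h2, h1, hA⟩ := (ev2.and (ev1.and (hAF : ∀ᶠ θ in F, θ ∈ A))).exists
    have hIcc := (hAsub hA).1
    have hne : θ ≠ γ := by
      have := (hAsub hA).2; simpa using this
    obtain ⟨hg1, hg2⟩ := hgood θ hIcc hne
    refine ⟨θ, hA, ?_⟩
    have hdiv : σ₂ (x + θ • d) / σ₁ (x + θ • d) < M ^ 2 := by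
      have heq : ε' / (σ₁ (x + γ • d) / 2) = M ^ 2 := by
        rw [hε'def]; field_simp
      have s1 : σ₂ (x + θ • d) / σ₁ (x + θ • d) ≤ σ₂ (x + θ • d) / (σ₁ (x + γ • d) / 2) := by
        gcongr
      have s2 : σ₂ (x + θ • d) / (σ₁ (x + γ • d) / 2) < ε' / (σ₁ (x + γ • d) / 2) := by
        gcongr
      linarith
    have : tv σ₁ σ₂ (x + θ • d) < M := by
      simp only [tv]
      exact (Real.sqrt_lt' hM).2 hdiv
    linarith
  have hIccL : Ico (γ - δ) γ ⊆ Icc α β \ {γ} := by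
    rintro θ ⟨h1, h2⟩
    have := (hmem θ (by rw [abs_le]; constructor <;> linarith)).2
    exact ⟨⟨this.1.le, this.2.le⟩, by simp [h2.ne]⟩
  have hIccR : Ioc γ (γ + δ) ⊆ Icc α β \ {γ} := by
    rintro θ ⟨h1, h2⟩
    have := (hmem θ (by rw [abs_le]; constructor <;> linarith)).2
    exact ⟨⟨this.1.le, this.2.le⟩, by simp [h1.ne']⟩
  have hlowL : ∀ M : ℝ, 0 < M → ∃ θ ∈ Ico (γ - δ) γ, tv σ₁ σ₂ (x + θ • d) ≤ M := by
    intro M hM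
    refine hlowgen M hM (nhdsWithin γ (Iio γ)) inferInstance nhdsWithin_le_nhds
      (Ico (γ - δ) γ) ?_ hIccL
    exact Filter.mem_of_superset (Ioo_mem_nhdsLT_of_mem ⟨by linarith, le_refl γ⟩)
      (fun θ hθ => ⟨hθ.1.le, hθ.2⟩)
  have hlowR : ∀ M : ℝ, 0 < M → ∃ θ ∈ Ioc γ (γ + δ), tv σ₁ σ₂ (x + θ • d) ≤ M := by
    intro M hM
    refine hlowgen M hM (nhdsWithin γ (Ioi γ)) inferInstance nhdsWithin_le_nhds
      (Ioc γ (γ + δ)) ?_ hIccR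
    exact Filter.mem_of_superset (Ioo_mem_nhdsGT_of_mem ⟨le_refl γ, by linarith⟩)
      (fun θ hθ => ⟨hθ.1, hθ.2.le⟩)
  have hτcont : ∀ A : Set ℝ, A ⊆ Icc α β \ {γ} →
      ContinuousOn (fun θ => tv σ₁ σ₂ (x + θ • d)) A := by
    intro A hA
    simp only [tv]
    apply ContinuousOn.sqrt
    refine ((cont_quad σ₂ x d).continuousOn).div ((cont_quad σ₁ x d).continuousOn) ?_
    intro θ hθ
    exact (hgood θ (hA hθ).1 (by simpa using (hA hθ).2)).1.ne'
  set τ := fun θ : ℝ => tv σ₁ σ₂ (x + θ • d) with hτdef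
  set I₁ := τ '' Ico (γ - δ) γ with hI₁
  set I₂ := τ '' Ioc γ (γ + δ) with hI₂
  have hpre1 : IsPreconnected I₁ := isPreconnected_Ico.image τ (hτcont _ hIccL)
  have hpre2 : IsPreconnected I₂ := isPreconnected_Ioc.image τ (hτcont _ hIccR)
  have hmemδL : γ - δ ∈ Ico (γ - δ) γ := ⟨le_refl _, by linarith⟩
  have hmemδR : γ + δ ∈ Ioc γ (γ + δ) := ⟨by linarith, le_refl _⟩
  have hτpos : ∀ θ : ℝ, θ ∈ Icc α β \ {γ} → 0 < τ θ := by
    intro θ hθ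
    obtain ⟨hg1, hg2⟩ := hgood θ hθ.1 (by simpa using hθ.2)
    exact Real.sqrt_pos.2 (div_pos hg2 hg1)
  set T := min (τ (γ - δ)) (τ (γ + δ)) with hT
  have hTpos : 0 < T :=
    lt_min (hτpos _ (hIccL hmemδL)) (hτpos _ (hIccR hmemδR))
  have hTI₁ : T ∈ I₁ := by
    obtain ⟨θ₁, hθ₁, hMθ₁⟩ := hlowL T hTpos
    exact hpre1.ordConnected.out (mem_image_of_mem τ hθ₁) (mem_image_of_mem τ hmemδL)
      ⟨hMθ₁, min_le_left _ _⟩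
  have hTI₂ : T ∈ I₂ := by
    obtain ⟨θ₂, hθ₂, hMθ₂⟩ := hlowR T hTpos
    exact hpre2.ordConnected.out (mem_image_of_mem τ hθ₂) (mem_image_of_mem τ hmemδR)
      ⟨hMθ₂, min_le_right _ _⟩
  have hbridge : J (Sset σ₀ σ₁ σ₂) (s, τ (γ - δ)) (s, τ (γ + δ)) := by
    refine ⟨(Ici s ×ˢ I₁) ∪ (Ici s ×ˢ I₂), ?_, ?_, ?_, ?_⟩
    · rintro ⟨u, t⟩ (⟨hu, ⟨θ, hθ, rfl⟩⟩ | ⟨hu, ⟨θ, hθ, rfl⟩⟩)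
      · exact memE θ (by rw [abs_le]; constructor <;> [linarith [hθ.1]; linarith [hθ.2]])
          hθ.2.ne u hu
      · exact memE θ (by rw [abs_le]; constructor <;> [linarith [hθ.1]; linarith [hθ.2]])
          hθ.1.ne' u hu
    · exact IsPreconnected.union (s, T) ⟨self_mem_Ici, hTI₁⟩ ⟨self_mem_Ici, hTI₂⟩
        ((isPreconnected_Ici).prod hpre1) ((isPreconnected_Ici).prod hpre2)
    · exact Or.inl ⟨self_mem_Ici, mem_image_of_mem τ hmemδL⟩
    · exact Or.inr ⟨self_mem_Ici, mem_image_of_mem τ hmemδR⟩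
  have hδαβ : α < γ - δ ∧ γ + δ < β := by
    constructor
    · linarith [(hmem (γ - δ) (by rw [abs_le]; constructor <;> linarith)).2.1]
    · linarith [(hmem (γ + δ) (by rw [abs_le]; constructor <;> linarith)).2.2]
  have hJ₁ : J (Sset σ₀ σ₁ σ₂) (s, tv σ₁ σ₂ (x + α • d)) (s, τ (γ - δ)) := by
    refine seg hs (by linarith [hδαβ.1]) ?_ ?_
    · intro θ hθ
      exact hgood θ ⟨hθ.1, by linarith [hθ.2]⟩ (by linarith [hθ.2]: θ ≠ γ)
    · intro θ hθ
      exact hq θ ⟨hθ.1, by linarith [hθ.2]⟩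
  have hJ₃ : J (Sset σ₀ σ₁ σ₂) (s, τ (γ + δ)) (s, tv σ₁ σ₂ (x + β • d)) := by
    refine seg hs (by linarith [hδαβ.2]) ?_ ?_
    · intro θ hθ
      exact hgood θ ⟨by linarith [hθ.1], hθ.2⟩ (by linarith [hθ.1]: θ ≠ γ)
    · intro θ hθ
      exact hq θ ⟨by linarith [hθ.1], hθ.2⟩
  exact (hJ₁.trans hbridge).trans hJ₃

lemma mix_aux (h₀ : ∀ v, 0 ≤ σ₀ v) (h₁ : ∀ v, 0 ≤ σ₁ v) (h₂ : ∀ v, 0 ≤ σ₂ v)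
    {x y : V} {s : ℝ} (hs : 0 < s)
    (hx1 : 0 < σ₁ x) (hx2 : 0 < σ₂ x) (hy1 : 0 < σ₁ y) (hy2 : 0 < σ₂ y)
    (hphx : 0 < ph σ₀ σ₁ σ₂ x s) (hphy : 0 < ph σ₀ σ₁ σ₂ y s)
    (hP : 0 ≤ ph σ₀ σ₁ σ₂ x s + ph σ₀ σ₁ σ₂ y s - ph σ₀ σ₁ σ₂ (y - x) s) :
    J (Sset σ₀ σ₁ σ₂) (s, tv σ₁ σ₂ x) (s, tv σ₁ σ₂ y) := by
  set d := y - x with hd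
  have hz0 : x + (0:ℝ) • d = x := by simp
  have hz1 : x + (1:ℝ) • d = y := by simp [hd]
  have hy' : ph σ₀ σ₁ σ₂ y s = ph σ₀ σ₁ σ₂ x s
      + (polar (⇑σ₁) x d * s ^ 2 - polar (⇑σ₀) x d * s + polar (⇑σ₂) x d) * 1
      + (σ₁ d * s ^ 2 - σ₀ d * s + σ₂ d) * 1 ^ 2 := by
    rw [← ph_expand x d s 1, hz1]
  have hdA : ph σ₀ σ₁ σ₂ d s = σ₁ d * s ^ 2 - σ₀ d * s + σ₂ d := rfl
  have hqid : ∀ θ : ℝ, ph σ₀ σ₁ σ₂ (x + θ • d) s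
      = (1 - θ) ^ 2 * ph σ₀ σ₁ σ₂ x s
        + θ * (1 - θ) * (ph σ₀ σ₁ σ₂ x s + ph σ₀ σ₁ σ₂ y s - ph σ₀ σ₁ σ₂ d s)
        + θ ^ 2 * ph σ₀ σ₁ σ₂ y s := by
    intro θ
    rw [ph_expand x d s θ, hy', hdA]
    ring
  have hqpos : ∀ θ ∈ Icc (0:ℝ) 1, 0 < ph σ₀ σ₁ σ₂ (x + θ • d) s := by
    intro θ hθ
    rw [hqid θ]
    have hPd : 0 ≤ ph σ₀ σ₁ σ₂ x s + ph σ₀ σ₁ σ₂ y s - ph σ₀ σ₁ σ₂ d s := by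
      rw [hd]; exact hP
    have ht1 : 0 ≤ θ * (1 - θ) * (ph σ₀ σ₁ σ₂ x s + ph σ₀ σ₁ σ₂ y s - ph σ₀ σ₁ σ₂ d s) :=
      mul_nonneg (mul_nonneg hθ.1 (by linarith [hθ.2])) hPd
    rcases le_or_gt θ (1/2) with hc | hc
    · have h1 : 0 < (1 - θ) ^ 2 * ph σ₀ σ₁ σ₂ x s :=
        mul_pos (pow_pos (by linarith : (0:ℝ) < 1 - θ) 2) hphx
      have h2 : 0 ≤ θ ^ 2 * ph σ₀ σ₁ σ₂ y s := mul_nonneg (sq_nonneg θ) hphy.le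
      linarith
    · have h1 : 0 < θ ^ 2 * ph σ₀ σ₁ σ₂ y s :=
        mul_pos (pow_pos (by linarith : (0:ℝ) < θ) 2) hphy
      have h2 : 0 ≤ (1 - θ) ^ 2 * ph σ₀ σ₁ σ₂ x s := mul_nonneg (sq_nonneg _) hphx.le
      linarith
  have hZ1 : ∀ {a b : ℝ}, σ₁ (x + a • d) = 0 → σ₁ (x + b • d) = 0 → a = b := by
    intro a b ha hb
    by_contra hne
    exact absurd (null_two σ₁ h₁ hne ha hb) hx1.ne'
  have hZ2 : ∀ {a b : ℝ}, σ₂ (x + a • d) = 0 → σ₂ (x + b • d) = 0 → a = b := by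
    intro a b ha hb
    by_contra hne
    exact absurd (null_two σ₂ h₂ hne ha hb) hx2.ne'
  have hnotboth : ∀ θ ∈ Icc (0:ℝ) 1, σ₁ (x + θ • d) = 0 → σ₂ (x + θ • d) ≠ 0 := by
    intro θ hθ ha hb
    have := hqpos θ hθ
    simp only [ph] at this
    rw [ha, hb] at this
    nlinarith [mul_nonneg (h₀ (x + θ • d)) hs.le]
  by_cases hA : ∃ γ ∈ Icc (0:ℝ) 1, σ₁ (x + γ • d) = 0 <;>
    by_cases hB : ∃ γ ∈ Icc (0:ℝ) 1, σ₂ (x + γ • d) = 0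
  · -- both vanish somewhere
    obtain ⟨γ₁, hγ₁I, hγ₁⟩ := hA
    obtain ⟨γ₂, hγ₂I, hγ₂⟩ := hB
    have hγne : γ₁ ≠ γ₂ := fun h => hnotboth γ₁ hγ₁I hγ₁ (h ▸ hγ₂)
    have hγ₁0 : 0 < γ₁ := by
      rcases eq_or_lt_of_le hγ₁I.1 with h | h
      · exfalso; rw [← h, hz0] at hγ₁; exact hx1.ne' hγ₁
      · exact h
    have hγ₁1 : γ₁ < 1 := by
      rcases eq_or_lt_of_le hγ₁I.2 with h | h
      · exfalso; rw [h, hz1] at hγ₁; exact hy1.ne' hγ₁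
      · exact h
    have hγ₂0 : 0 < γ₂ := by
      rcases eq_or_lt_of_le hγ₂I.1 with h | h
      · exfalso; rw [← h, hz0] at hγ₂; exact hx2.ne' hγ₂
      · exact h
    have hγ₂1 : γ₂ < 1 := by
      rcases eq_or_lt_of_le hγ₂I.2 with h | h
      · exfalso; rw [h, hz1] at hγ₂; exact hy2.ne' hγ₂
      · exact h
    rcases lt_or_gt_of_ne hγne with hlt | hgt
    · set μ := (γ₁ + γ₂) / 2 with hμ
      have hJ₁ : J (Sset σ₀ σ₁ σ₂) (s, tv σ₁ σ₂ (x + (0:ℝ) • d)) (s, tv σ₁ σ₂ (x + μ • d)) := by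
        refine cross1 h₀ h₁ h₂ hs hγ₁0 (by rw [hμ]; linarith) hγ₁ ?_ ?_
        · intro θ hθ hne
          constructor
          · refine lt_of_le_of_ne (h₁ _) fun h => hne (hZ1 h.symm hγ₁)
          · refine lt_of_le_of_ne (h₂ _) fun h => ?_
            have := hZ2 h.symm hγ₂
            rw [this] at hθ
            have := hθ.2; rw [hμ] at this; linarith
        · intro θ hθ
          exact hqpos θ ⟨hθ.1, by rw [hμ] at hθ; linarith [hθ.2]⟩
      have hJ₂ : J (Sset σ₀ σ₁ σ₂) (s, tv σ₁ σ₂ (x + μ • d)) (s, tv σ₁ σ₂ (x + (1:ℝ) • d)) := by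
        refine cross2 h₀ h₁ h₂ hs (by rw [hμ]; linarith) hγ₂1 hγ₂ ?_ ?_
        · intro θ hθ hne
          constructor
          · refine lt_of_le_of_ne (h₁ _) fun h => ?_
            have := hZ1 h.symm hγ₁
            rw [this] at hθ
            have := hθ.1; rw [hμ] at this; linarith
          · refine lt_of_le_of_ne (h₂ _) fun h => hne (hZ2 h.symm hγ₂)
        · intro θ hθ
          exact hqpos θ ⟨by rw [hμ] at hθ; linarith [hθ.1], hθ.2⟩
      have := hJ₁.trans hJ₂
      rwa [hz0, hz1] at this
    · set μ := (γ₂ + γ₁) / 2 with hμ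
      have hJ₁ : J (Sset σ₀ σ₁ σ₂) (s, tv σ₁ σ₂ (x + (0:ℝ) • d)) (s, tv σ₁ σ₂ (x + μ • d)) := by
        refine cross2 h₀ h₁ h₂ hs hγ₂0 (by rw [hμ]; linarith) hγ₂ ?_ ?_
        · intro θ hθ hne
          constructor
          · refine lt_of_le_of_ne (h₁ _) fun h => ?_
            have := hZ1 h.symm hγ₁
            rw [this] at hθ
            have := hθ.2; rw [hμ] at this; linarith
          · refine lt_of_le_of_ne (h₂ _) fun h => hne (hZ2 h.symm hγ₂)
        · intro θ hθ
          exact hqpos θ ⟨hθ.1, by rw [hμ] at hθ; linarith [hθ.2]⟩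
      have hJ₂ : J (Sset σ₀ σ₁ σ₂) (s, tv σ₁ σ₂ (x + μ • d)) (s, tv σ₁ σ₂ (x + (1:ℝ) • d)) := by
        refine cross1 h₀ h₁ h₂ hs (by rw [hμ]; linarith) hγ₁1 hγ₁ ?_ ?_
        · intro θ hθ hne
          constructor
          · refine lt_of_le_of_ne (h₁ _) fun h => hne (hZ1 h.symm hγ₁)
          · refine lt_of_le_of_ne (h₂ _) fun h => ?_
            have := hZ2 h.symm hγ₂
            rw [this] at hθ
            have := hθ.1; rw [hμ] at this; linarith
        · intro θ hθ
          exact hqpos θ ⟨by rw [hμ] at hθ; linarith [hθ.1], hθ.2⟩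
      have := hJ₁.trans hJ₂
      rwa [hz0, hz1] at this
  · -- only σ₁ vanishes
    obtain ⟨γ, hγI, hγ⟩ := hA
    push_neg at hB
    have hγ0 : 0 < γ := by
      rcases eq_or_lt_of_le hγI.1 with h | h
      · exfalso; rw [← h, hz0] at hγ; exact hx1.ne' hγ
      · exact h
    have hγ1' : γ < 1 := by
      rcases eq_or_lt_of_le hγI.2 with h | h
      · exfalso; rw [h, hz1] at hγ; exact hy1.ne' hγ
      · exact h
    have := cross1 h₀ h₁ h₂ hs hγ0 hγ1' hγ
      (fun θ hθ hne => ⟨lt_of_le_of_ne (h₁ _) fun h => hne (hZ1 h.symm hγ),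
        lt_of_le_of_ne (h₂ _) (Ne.symm (hB θ hθ))⟩) hqpos
    rwa [hz0, hz1] at this
  · -- only σ₂ vanishes
    obtain ⟨γ, hγI, hγ⟩ := hB
    push_neg at hA
    have hγ0 : 0 < γ := by
      rcases eq_or_lt_of_le hγI.1 with h | h
      · exfalso; rw [← h, hz0] at hγ; exact hx2.ne' hγ
      · exact h
    have hγ1' : γ < 1 := by
      rcases eq_or_lt_of_le hγI.2 with h | h
      · exfalso; rw [h, hz1] at hγ; exact hy2.ne' hγ
      · exact h
    have := cross2 h₀ h₁ h₂ hs hγ0 hγ1' hγ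
      (fun θ hθ hne => ⟨lt_of_le_of_ne (h₁ _) (Ne.symm (hA θ hθ)),
        lt_of_le_of_ne (h₂ _) fun h => hne (hZ2 h.symm hγ)⟩) hqpos
    rwa [hz0, hz1] at this
  · -- neither vanishes
    push_neg at hA hB
    have := seg hs zero_le_one
      (fun θ hθ => ⟨lt_of_le_of_ne (h₁ _) (Ne.symm (hA θ hθ)),
        lt_of_le_of_ne (h₂ _) (Ne.symm (hB θ hθ))⟩) hqpos
    rwa [hz0, hz1] at this

lemma mix (h₀ : ∀ v, 0 ≤ σ₀ v) (h₁ : ∀ v, 0 ≤ σ₁ v) (h₂ : ∀ v, 0 ≤ σ₂ v)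
    {x y : V} {s : ℝ} (hs : 0 < s)
    (hx1 : 0 < σ₁ x) (hx2 : 0 < σ₂ x) (hy1 : 0 < σ₁ y) (hy2 : 0 < σ₂ y)
    (hphx : 0 < ph σ₀ σ₁ σ₂ x s) (hphy : 0 < ph σ₀ σ₁ σ₂ y s) :
    J (Sset σ₀ σ₁ σ₂) (s, tv σ₁ σ₂ x) (s, tv σ₁ σ₂ y) := by
  have hpar : ∀ σ : QuadraticForm ℝ V, σ (y - x) + σ (-y - x) = 2 * σ x + 2 * σ y := by
    intro σ
    have e1 : σ (y + (-1:ℝ) • x) = σ y + polar (⇑σ) y x * (-1) + σ x * (-1) ^ 2 :=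
      expand σ y x (-1)
    have e2 : σ (y + (1:ℝ) • x) = σ y + polar (⇑σ) y x * 1 + σ x * 1 ^ 2 :=
      expand σ y x 1
    have h1 : y + (-1:ℝ) • x = y - x := by module
    have h2 : y + (1:ℝ) • x = y + x := by module
    have h3 : -y - x = -(y + x) := by abel
    rw [h1] at e1; rw [h2] at e2
    rw [h3, QuadraticMap.map_neg, e1, e2]; ring
  rcases le_or_gt 0 (ph σ₀ σ₁ σ₂ x s + ph σ₀ σ₁ σ₂ y s - ph σ₀ σ₁ σ₂ (y - x) s) with hP | hP
  · exact mix_aux h₀ h₁ h₂ hs hx1 hx2 hy1 hy2 hphx hphy hP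
  · have hneg : ∀ σ : QuadraticForm ℝ V, σ (-y) = σ y := fun σ => QuadraticMap.map_neg σ y
    have hphny : ph σ₀ σ₁ σ₂ (-y) s = ph σ₀ σ₁ σ₂ y s := by simp only [ph, hneg]
    have hP' : 0 ≤ ph σ₀ σ₁ σ₂ x s + ph σ₀ σ₁ σ₂ (-y) s - ph σ₀ σ₁ σ₂ (-y - x) s := by
      have e0 := hpar σ₀; have e1 := hpar σ₁; have e2 := hpar σ₂
      simp only [ph] at hP ⊢
      rw [hneg σ₀, hneg σ₁, hneg σ₂]
      nlinarith [hP, e0, e1, e2, sq_nonneg s]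
    have := mix_aux h₀ h₁ h₂ hs hx1 hx2 (hneg σ₁ ▸ hy1) (hneg σ₂ ▸ hy2) hphx
      (hphny ▸ hphy) hP'
    have htv : tv σ₁ σ₂ (-y) = tv σ₁ σ₂ y := by simp only [tv, hneg]
    rwa [htv] at this

theorem main (h₀nonneg : ∀ x, 0 ≤ σ₀ x) (h₁nonneg : ∀ x, 0 ≤ σ₁ x) (h₂nonneg : ∀ x, 0 ≤ σ₂ x)
    (h₁ne : ∃ x, σ₁ x ≠ 0) (h₂ne : ∃ x, σ₂ x ≠ 0)
    (hnotpos : ∀ s : ℝ, 0 < s → ∃ x : V, σ₀ x < s * σ₁ x + s⁻¹ * σ₂ x) :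
    IsConnected (Sset σ₀ σ₁ σ₂) := by
  -- a good vector
  have hgood : ∀ s : ℝ, 0 < s → ∃ x : V, 0 < σ₁ x ∧ 0 < σ₂ x ∧ 0 < ph σ₀ σ₁ σ₂ x s := by
    intro s hs
    obtain ⟨x₀, hx₀⟩ := hnotpos s hs
    exact perturb h₀nonneg h₁nonneg h₂nonneg h₁ne h₂ne hs x₀ hx₀
  obtain ⟨x₁, hx₁1, hx₁2, hx₁p⟩ := hgood 1 one_pos
  have hne : (Sset σ₀ σ₁ σ₂).Nonempty := ⟨(1, tv σ₁ σ₂ x₁), mem_S hx₁1 hx₁2 one_pos hx₁p⟩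
  -- the two open sets
  set T : Set ℝ := {s | 0 < s ∧ ∃ z : V, 0 < σ₁ z ∧ 0 < σ₂ z ∧
      ∀ u, 0 < u → u ≤ s → 0 < ph σ₀ σ₁ σ₂ z u} with hT
  set U : Set ℝ := {s | 0 < s ∧ ∃ w : V, 0 < σ₁ w ∧ 0 < σ₂ w ∧
      ∀ u, s ≤ u → 0 < ph σ₀ σ₁ σ₂ w u} with hU
  have hphc : ∀ z : V, Continuous fun u : ℝ => ph σ₀ σ₁ σ₂ z u := by
    intro z
    have : (fun u : ℝ => ph σ₀ σ₁ σ₂ z u) = fun u => σ₁ z * u ^ 2 - σ₀ z * u + σ₂ z := rfl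
    rw [this]; fun_prop
  have hTopen : IsOpen T := by
    rw [Metric.isOpen_iff]
    rintro s ⟨hs, z, hz1, hz2, hzall⟩
    have hzo : IsOpen {u : ℝ | 0 < ph σ₀ σ₁ σ₂ z u} := isOpen_lt continuous_const (hphc z)
    obtain ⟨ε, hε, hball⟩ := Metric.isOpen_iff.1 hzo s (hzall s hs (le_refl s))
    refine ⟨min ε s, lt_min hε hs, ?_⟩
    intro s' hs'
    rw [Metric.mem_ball, Real.dist_eq] at hs'
    have hs'pos : 0 < s' := by
      rcases abs_lt.1 hs' with ⟨h1, _⟩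
      have := min_le_right ε s; linarith
    refine ⟨hs'pos, z, hz1, hz2, fun u hu hus' => ?_⟩
    rcases le_or_gt u s with h | h
    · exact hzall u hu h
    · refine hball ?_
      rw [Metric.mem_ball, Real.dist_eq, abs_lt]
      rcases abs_lt.1 hs' with ⟨h1, h2⟩
      have := min_le_left ε s
      constructor <;> linarith
  have hUopen : IsOpen U := by
    rw [Metric.isOpen_iff]
    rintro s ⟨hs, w, hw1, hw2, hwall⟩
    have hzo : IsOpen {u : ℝ | 0 < ph σ₀ σ₁ σ₂ w u} := isOpen_lt continuous_const (hphc w)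
    obtain ⟨ε, hε, hball⟩ := Metric.isOpen_iff.1 hzo s (hwall s (le_refl s))
    refine ⟨min ε s, lt_min hε hs, ?_⟩
    intro s' hs'
    rw [Metric.mem_ball, Real.dist_eq] at hs'
    have hs'pos : 0 < s' := by
      rcases abs_lt.1 hs' with ⟨h1, _⟩
      have := min_le_right ε s; linarith
    refine ⟨hs'pos, w, hw1, hw2, fun u hus' => ?_⟩
    rcases le_or_gt s u with h | h
    · exact hwall u h
    · refine hball ?_
      rw [Metric.mem_ball, Real.dist_eq, abs_lt]
      rcases abs_lt.1 hs' with ⟨h1, h2⟩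
      have hu0 : 0 < u := lt_of_lt_of_le hs'pos hus'
      have := min_le_left ε s
      constructor <;> linarith
  have hcover : Ioi (0:ℝ) ⊆ T ∪ U := by
    intro s hs
    obtain ⟨z, hz1, hz2, hzp⟩ := hgood s hs
    rcases dich (h₁nonneg z) hs hzp with h | h
    · exact Or.inl ⟨hs, z, hz1, hz2, h⟩
    · exact Or.inr ⟨hs, z, hz1, hz2, h⟩
  have hTne : (Ioi (0:ℝ) ∩ T).Nonempty := by
    refine ⟨σ₂ x₁ / (σ₀ x₁ + 1), ?_, ?_, x₁, hx₁1, hx₁2, ?_⟩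
    · have : (0:ℝ) < σ₀ x₁ + 1 := by linarith [h₀nonneg x₁]
      exact div_pos hx₁2 this
    · have : (0:ℝ) < σ₀ x₁ + 1 := by linarith [h₀nonneg x₁]
      exact div_pos hx₁2 this
    · exact fun u hu hub => ph_pos_small (h₀nonneg x₁) (h₁nonneg x₁) hx₁2 u hu hub
  have hUne : (Ioi (0:ℝ) ∩ U).Nonempty := by
    refine ⟨(σ₀ x₁ + 1) / σ₁ x₁, ?_, ?_, x₁, hx₁1, hx₁2, ?_⟩
    · have : (0:ℝ) < σ₀ x₁ + 1 := by linarith [h₀nonneg x₁]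
      exact div_pos this hx₁1
    · have : (0:ℝ) < σ₀ x₁ + 1 := by linarith [h₀nonneg x₁]
      exact div_pos this hx₁1
    · exact fun u hub => ph_pos_large (h₀nonneg x₁) hx₁1 (h₂nonneg x₁) u hub
  obtain ⟨sbar, hsbarIoi, hsbarT, hsbarU⟩ :=
    isPreconnected_Ioi (a := (0:ℝ)) T U hTopen hUopen hcover hTne hUne
  obtain ⟨hsbar, z, hz1, hz2, hzall⟩ := hsbarT
  obtain ⟨-, w, hw1, hw2, hwall⟩ := hsbarU
  -- every point joins to the hub
  have hhub : ∀ p ∈ Sset σ₀ σ₁ σ₂, J (Sset σ₀ σ₁ σ₂) p (sbar, tv σ₁ σ₂ z) := by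
    rintro ⟨p₁, p₂⟩ hp
    have hp₁ : 0 < p₁ := hp.1
    obtain ⟨x, hx1, hx2, htveq, hphx⟩ := extract hp
    have hpeq : ((p₁, p₂) : ℝ × ℝ) = (p₁, tv σ₁ σ₂ x) := by
      simp only [Prod.mk.injEq]
      exact ⟨trivial, htveq.symm⟩
    rw [hpeq]
    rcases dich (h₁nonneg x) hp₁ hphx with hL | hR
    · set ε := min p₁ sbar with hε
      have hε0 : 0 < ε := lt_min hp₁ hsbar
      have hJ₁ : J (Sset σ₀ σ₁ σ₂) (ε, tv σ₁ σ₂ x) (p₁, tv σ₁ σ₂ x) :=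
        horiz hx1 hx2 hε0 (min_le_left _ _)
          (fun u hu hub => hL u (lt_of_lt_of_le hε0 hu) hub)
      have hJ₂ : J (Sset σ₀ σ₁ σ₂) (ε, tv σ₁ σ₂ x) (ε, tv σ₁ σ₂ z) :=
        mix h₀nonneg h₁nonneg h₂nonneg hε0 hx1 hx2 hz1 hz2
          (hL ε hε0 (min_le_left _ _)) (hzall ε hε0 (min_le_right _ _))
      have hJ₃ : J (Sset σ₀ σ₁ σ₂) (ε, tv σ₁ σ₂ z) (sbar, tv σ₁ σ₂ z) :=
        horiz hz1 hz2 hε0 (min_le_right _ _)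
          (fun u hu hub => hzall u (lt_of_lt_of_le hε0 hu) hub)
      exact (hJ₁.symm.trans hJ₂).trans hJ₃
    · set M := max p₁ sbar with hM
      have hM0 : 0 < M := lt_of_lt_of_le hp₁ (le_max_left _ _)
      have hJ₁ : J (Sset σ₀ σ₁ σ₂) (p₁, tv σ₁ σ₂ x) (M, tv σ₁ σ₂ x) :=
        horiz hx1 hx2 hp₁ (le_max_left _ _) (fun u hu _ => hR u hu)
      have hJ₂ : J (Sset σ₀ σ₁ σ₂) (M, tv σ₁ σ₂ x) (M, tv σ₁ σ₂ w) :=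
        mix h₀nonneg h₁nonneg h₂nonneg hM0 hx1 hx2 hw1 hw2
          (hR M (le_max_left _ _)) (hwall M (le_max_right _ _))
      have hJ₃ : J (Sset σ₀ σ₁ σ₂) (sbar, tv σ₁ σ₂ w) (M, tv σ₁ σ₂ w) :=
        horiz hw1 hw2 hsbar (le_max_right _ _) (fun u hu _ => hwall u hu)
      have hJ₄ : J (Sset σ₀ σ₁ σ₂) (sbar, tv σ₁ σ₂ w) (sbar, tv σ₁ σ₂ z) :=
        mix h₀nonneg h₁nonneg h₂nonneg hsbar hw1 hw2 hz1 hz2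
          (hwall sbar (le_refl _)) (hzall sbar hsbar (le_refl _))
      exact ((hJ₁.trans hJ₂).trans hJ₃.symm).trans hJ₄
  refine ⟨hne, isPreconnected_of_forall_pair ?_⟩
  intro p hp q hq
  obtain ⟨C, hC1, hC2, hC3, hC4⟩ := (hhub p hp).trans (hhub q hq).symm
  exact ⟨C, hC1, hC3, hC4, hC2⟩

end SconnAux

/-- Property 4: for nonnegative nonzero quadratic forms `σ₀, σ₁, σ₂` on a real vector
space such that `σˢ = σ₀ − s·σ₁ − s⁻¹·σ₂` fails to be nonnegative for every `s > 0`,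
the set `S = {(s,t) ∈ (0,∞)² : ∃ x, σˢ[x] < 0, σ₁[x] > 0, σ₂[x] = t²·σ₁[x]}` is a
connected subset of `ℝ²`. -/
theorem the_set_S_is_connected
    {V : Type*} [AddCommGroup V] [Module ℝ V]
    (σ₀ σ₁ σ₂ : QuadraticForm ℝ V)
    (h₀nonneg : ∀ x, 0 ≤ σ₀ x) (h₁nonneg : ∀ x, 0 ≤ σ₁ x) (h₂nonneg : ∀ x, 0 ≤ σ₂ x)
    (h₀ne : ∃ x, σ₀ x ≠ 0) (h₁ne : ∃ x, σ₁ x ≠ 0) (h₂ne : ∃ x, σ₂ x ≠ 0)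
    (hnotpos : ∀ s : ℝ, 0 < s → ∃ x : V, σ₀ x < s * σ₁ x + s⁻¹ * σ₂ x) :
    IsConnected {p : ℝ × ℝ | 0 < p.1 ∧ 0 < p.2 ∧ ∃ x : V,
        σ₀ x - p.1 * σ₁ x - p.1⁻¹ * σ₂ x < 0 ∧ 0 < σ₁ x ∧
        σ₂ x = p.2 ^ 2 * σ₁ x} := by
  exact SconnAux.main h₀nonneg h₁nonneg h₂nonneg h₁ne h₂ne hnotpos
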